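/- arXiv:1006.1845 — 2 statements merged into one kernel-verified Lean document; each statement's English description precedes it below -/
import Mathlib

section
/- Let n ≥ 1 and let f, g ∈ L²(H_n; ℂ) be compactly supported with Sf = 0 almost everywhere on ℝ^{2n}. Then (Tf) *_H g = T(f *_H g) almost everywhere on H_n. -/
open MeasureTheory

/-- The Heisenberg group `H_n`, as a manifold, is `ℝⁿ × ℝⁿ × ℝ`. -/
abbrev Heis (n : ℕ) := (Fin n → ℝ) × (Fin n → ℝ) × ℝ

/-- The Euclidean inner product on `ℝⁿ`. -/
def dot {n : ℕ} (a b : Fin n → ℝ) : ℝ := ∑ i, a i * b i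

/-- Convolution with respect to the Heisenberg group structure
`(x,y,z)·(x',y',z') = (x+x', y+y', z+z'+⟨x,y'⟩)`:
`(f *_H g)(p) = ∫ f(q) g(q⁻¹ p) dq`. -/
noncomputable def hconv {n : ℕ} (f g : Heis n → ℂ) : Heis n → ℂ :=
  fun p => ∫ q : Heis n,
    f q * g (p.1 - q.1, p.2.1 - q.2.1, p.2.2 - q.2.2 + dot q.1 q.2.1 - dot q.1 p.2.1)

/-- The operator `Sf(x,y) = ∫_ℝ f(x,y,z) dz`. -/
noncomputable def S {n : ℕ} (f : Heis n → ℂ) : (Fin n → ℝ) × (Fin n → ℝ) → ℂ :=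
  fun xy => ∫ z : ℝ, f (xy.1, xy.2, z)

/-- The operator `Tf(x,y,z) = ∫_{-∞}^z f(x,y,t) dt`. -/
noncomputable def T {n : ℕ} (f : Heis n → ℂ) : Heis n → ℂ :=
  fun p => ∫ t in Set.Iic p.2.2, f (p.1, p.2.1, t)

/-- A function vanishes almost everywhere outside some compact set. -/
def AECompactlySupported {n : ℕ} (f : Heis n → ℂ) : Prop :=
  ∃ K : Set (Heis n), IsCompact K ∧ ∀ᵐ p ∂(volume), p ∉ K → f p = 0

section Helpers

open Set Filter
open scoped ENNReal

namespace HeisAux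

variable {n : ℕ}

lemma measurable_dot : Measurable (fun w : (Fin n → ℝ) × (Fin n → ℝ) => dot w.1 w.2) := by
  unfold dot
  exact Finset.measurable_sum _ fun i _ =>
    ((measurable_pi_apply i).comp measurable_fst).mul ((measurable_pi_apply i).comp measurable_snd)

lemma abs_dot_le (a b : Fin n → ℝ) : |dot a b| ≤ n * (‖a‖ * ‖b‖) := by
  have h : ∀ i, |a i * b i| ≤ ‖a‖ * ‖b‖ := fun i => by
    rw [abs_mul]
    have ha := norm_le_pi_norm a i
    have hb := norm_le_pi_norm b i
    simp only [Real.norm_eq_abs] at ha hb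
    exact mul_le_mul ha hb (abs_nonneg _) (norm_nonneg a)
  calc |dot a b| ≤ ∑ i, |a i * b i| := Finset.abs_sum_le_sum_abs _ _
    _ ≤ ∑ _i : Fin n, ‖a‖ * ‖b‖ := Finset.sum_le_sum fun i _ => h i
    _ = n * (‖a‖ * ‖b‖) := by
        simp [Finset.sum_const, Finset.card_univ, nsmul_eq_mul]

/-- A "shear" in the central variable is measure preserving. -/
lemma mp_shear (e : (Fin n → ℝ) → (Fin n → ℝ) → ℝ)
    (he : Measurable fun w : (Fin n → ℝ) × (Fin n → ℝ) => e w.1 w.2) :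
    MeasurePreserving (fun q : Heis n => ((q.1, q.2.1, q.2.2 + e q.1 q.2.1) : Heis n))
      volume volume := by
  have inner : ∀ a : Fin n → ℝ, MeasurePreserving
      (fun bc : (Fin n → ℝ) × ℝ => ((bc.1, bc.2 + e a bc.1) : (Fin n → ℝ) × ℝ))
      volume volume := by
    intro a
    rw [Measure.volume_eq_prod]
    refine (MeasurePreserving.id _).skew_product
      (g := fun b c => c + e a b) ?_
      (Eventually.of_forall fun b => map_add_right_eq_self volume (e a b))
    exact measurable_snd.add (he.comp (measurable_const.prodMk measurable_fst))
  rw [Measure.volume_eq_prod]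
  refine (MeasurePreserving.id _).skew_product
    (g := fun a (bc : (Fin n → ℝ) × ℝ) => ((bc.1, bc.2 + e a bc.1) : (Fin n → ℝ) × ℝ)) ?_
    (Eventually.of_forall fun a => (inner a).map_eq)
  exact (measurable_fst.comp measurable_snd).prodMk
      ((measurable_snd.comp measurable_snd).add
        (he.comp (measurable_fst.prodMk (measurable_fst.comp measurable_snd))))

/-- The map `q ↦ q⁻¹ ⬝ p` of the Heisenberg group is measure preserving. -/
lemma mp_sigma (x y : Fin n → ℝ) (z : ℝ) :
    MeasurePreserving (fun q : Heis n =>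
      ((x - q.1, y - q.2.1, z - q.2.2 + dot q.1 q.2.1 - dot q.1 y) : Heis n))
      volume volume := by
  have hs := mp_shear (fun a b => dot a y - dot a b)
    ((measurable_dot.comp (measurable_fst.prodMk measurable_const)).sub measurable_dot)
  have hm : MeasurePreserving (fun q : Heis n => ((x - q.1, y - q.2.1, z - q.2.2) : Heis n))
      volume volume := by
    rw [Measure.volume_eq_prod]
    have h23 : MeasurePreserving
        (fun bc : (Fin n → ℝ) × ℝ => ((y - bc.1, z - bc.2) : (Fin n → ℝ) × ℝ))
        volume volume := by
      rw [Measure.volume_eq_prod]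
      exact (Measure.measurePreserving_sub_left volume y).prod
        (Measure.measurePreserving_sub_left volume z)
    exact (Measure.measurePreserving_sub_left volume x).prod h23
  have hcomp := hm.comp hs
  have heq : (fun q : Heis n =>
      ((x - q.1, y - q.2.1, z - q.2.2 + dot q.1 q.2.1 - dot q.1 y) : Heis n))
      = (fun q : Heis n => ((x - q.1, y - q.2.1, z - q.2.2) : Heis n)) ∘
        (fun q : Heis n => ((q.1, q.2.1, q.2.2 + (dot q.1 y - dot q.1 q.2.1)) : Heis n)) := by
    funext q
    simp only [Function.comp_apply]
    refine Prod.ext rfl (Prod.ext rfl ?_)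
    show z - q.2.2 + dot q.1 q.2.1 - dot q.1 y = z - (q.2.2 + (dot q.1 y - dot q.1 q.2.1))
    ring
  rw [heq]
  exact hcomp

lemma mp_swap_last :
    MeasurePreserving (fun w : Heis n × ℝ => (((w.1.1, w.1.2.1, w.2), w.1.2.2) : Heis n × ℝ))
      volume volume := by
  have h1 : MeasurePreserving
      (MeasurableEquiv.prodAssoc :
        ((Fin n → ℝ) × ((Fin n → ℝ) × ℝ)) × ℝ ≃ᵐ (Fin n → ℝ) × (((Fin n → ℝ) × ℝ) × ℝ))
      volume volume := volume_preserving_prodAssoc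
  have hswap : MeasurePreserving (Prod.swap : ℝ × ℝ → ℝ × ℝ) volume volume := by
    rw [Measure.volume_eq_prod]
    exact Measure.measurePreserving_swap
  have hinner : MeasurePreserving
      (fun u : ((Fin n → ℝ) × ℝ) × ℝ => (((u.1.1, u.2), u.1.2) : ((Fin n → ℝ) × ℝ) × ℝ))
      volume volume := by
    have ha : MeasurePreserving
        (MeasurableEquiv.prodAssoc : ((Fin n → ℝ) × ℝ) × ℝ ≃ᵐ (Fin n → ℝ) × (ℝ × ℝ))
        volume volume := volume_preserving_prodAssoc
    have hmid : MeasurePreserving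
        (fun u : (Fin n → ℝ) × (ℝ × ℝ) => ((u.1, u.2.swap) : (Fin n → ℝ) × (ℝ × ℝ)))
        volume volume := by
      rw [Measure.volume_eq_prod]
      exact (MeasurePreserving.id _).prod hswap
    have := (ha.symm (MeasurableEquiv.prodAssoc)).comp (hmid.comp ha)
    exact this
  have hend : MeasurePreserving
      (fun u : (Fin n → ℝ) × (((Fin n → ℝ) × ℝ) × ℝ) =>
        ((u.1, ((u.2.1.1, u.2.2), u.2.1.2)) : (Fin n → ℝ) × (((Fin n → ℝ) × ℝ) × ℝ)))
      volume volume := by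
    rw [Measure.volume_eq_prod]
    exact (MeasurePreserving.id _).prod hinner
  have := (h1.symm (MeasurableEquiv.prodAssoc)).comp (hend.comp h1)
  exact this

lemma mp_tau (z : ℝ) :
    MeasurePreserving (fun w : Heis n × ℝ =>
      (((w.1.1, w.1.2.1, w.2), z - w.1.2.2 + w.2) : Heis n × ℝ)) volume volume := by
  have h2 : MeasurePreserving
      (fun w : Heis n × ℝ => ((w.1, z + w.1.2.2 - w.2) : Heis n × ℝ)) volume volume := by
    rw [Measure.volume_eq_prod]
    refine (MeasurePreserving.id _).skew_product
      (g := fun (q : Heis n) (c : ℝ) => z + q.2.2 - c) ?_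
      (Eventually.of_forall fun q =>
        (Measure.measurePreserving_sub_left volume (z + q.2.2)).map_eq)
    exact (measurable_const.add
        ((measurable_snd.comp (measurable_snd.comp measurable_fst)))).sub measurable_snd
  have hcomp := h2.comp (mp_swap_last (n := n))
  have heq : (fun w : Heis n × ℝ =>
      (((w.1.1, w.1.2.1, w.2), z - w.1.2.2 + w.2) : Heis n × ℝ))
      = (fun w : Heis n × ℝ => ((w.1, z + w.1.2.2 - w.2) : Heis n × ℝ)) ∘
        (fun w : Heis n × ℝ => (((w.1.1, w.1.2.1, w.2), w.1.2.2) : Heis n × ℝ)) := by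
    funext w
    simp only [Function.comp_apply]
    refine Prod.ext rfl ?_
    show z - w.1.2.2 + w.2 = z + w.2 - w.1.2.2
    ring
  rw [heq]
  exact hcomp

end HeisAux

end Helpers
section Helpers2

open Set Filter
open scoped ENNReal

namespace HeisAux

variable {n : ℕ}

lemma T_congr_ae {h h₂ : Heis n → ℂ} (hae : h =ᵐ[volume] h₂) :
    T h =ᵐ[volume] T h₂ := by
  have hmp : MeasurePreserving
      (⇑(MeasurableEquiv.prodAssoc : ((Fin n → ℝ) × (Fin n → ℝ)) × ℝ ≃ᵐ Heis n))
      volume volume := volume_preserving_prodAssoc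
  have hqmp := hmp.quasiMeasurePreserving
  have hcomp : (fun u : ((Fin n → ℝ) × (Fin n → ℝ)) × ℝ => h (u.1.1, u.1.2, u.2))
      =ᵐ[volume] (fun u => h₂ (u.1.1, u.1.2, u.2)) := hqmp.ae_eq hae
  rw [Measure.volume_eq_prod] at hcomp
  have hsl := Measure.ae_ae_of_ae_prod hcomp
  have hnull : volume {w : (Fin n → ℝ) × (Fin n → ℝ) |
      ¬ (fun t => h (w.1, w.2, t)) =ᵐ[volume] (fun t => h₂ (w.1, w.2, t))} = 0 := by
    rw [← ae_iff]
    exact hsl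
  obtain ⟨N, hNsub, hNmeas, hNnull⟩ := exists_measurable_superset_of_null hnull
  have hSm : MeasurableSet {p : Heis n | (p.1, p.2.1) ∈ N} :=
    (measurable_fst.prodMk (measurable_fst.comp measurable_snd)) hNmeas
  have hS0 : volume {p : Heis n | (p.1, p.2.1) ∈ N} = 0 := by
    have hpre := hmp.measure_preimage hSm.nullMeasurableSet
    have hpreimage : (⇑(MeasurableEquiv.prodAssoc :
        ((Fin n → ℝ) × (Fin n → ℝ)) × ℝ ≃ᵐ Heis n)) ⁻¹' {p : Heis n | (p.1, p.2.1) ∈ N}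
        = N ×ˢ (univ : Set ℝ) := by
      ext u
      simp [MeasurableEquiv.prodAssoc, Equiv.prodAssoc]
    rw [hpreimage] at hpre
    rw [← hpre, Measure.volume_eq_prod, Measure.prod_prod, hNnull, zero_mul]
  have hgood : ∀ᵐ p : Heis n, (p.1, p.2.1) ∉ N := by
    rw [ae_iff]
    simpa using hS0
  filter_upwards [hgood] with p hp
  have hae_sl : (fun t => h (p.1, p.2.1, t)) =ᵐ[volume] (fun t => h₂ (p.1, p.2.1, t)) := by
    by_contra hcon
    exact hp (hNsub hcon)
  exact integral_congr_ae (ae_restrict_of_ae hae_sl)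

end HeisAux

end Helpers2
section Helpers3

open Set Filter
open scoped ENNReal

namespace HeisAux

variable {n : ℕ}

lemma good_repr {h : Heis n → ℂ} (hm : MemLp h 2 volume) (hc : AECompactlySupported h) :
    ∃ (h₂ : Heis n → ℂ) (R : ℝ), StronglyMeasurable h₂ ∧ h₂ =ᵐ[volume] h ∧
      ∀ q : Heis n, h₂ q ≠ 0 → ‖q.1‖ ≤ R ∧ ‖q.2.1‖ ≤ R ∧ |q.2.2| ≤ R := by
  obtain ⟨K, hK, hK0⟩ := hc
  obtain ⟨R, hR⟩ := hK.isBounded.subset_closedBall 0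
  refine ⟨K.indicator (hm.1.mk h), R,
    (hm.1.stronglyMeasurable_mk).indicator hK.isClosed.measurableSet, ?_, ?_⟩
  · filter_upwards [hm.1.ae_eq_mk, hK0] with q h1 h2
    by_cases hq : q ∈ K
    · rw [Set.indicator_of_mem hq]; exact h1.symm
    · rw [Set.indicator_of_notMem hq]; exact (h2 hq).symm
  · intro q hq
    have hqK : q ∈ K := by
      by_contra hqK
      exact hq (Set.indicator_of_notMem hqK _)
    have hn : ‖q‖ ≤ R := by simpa using hR hqK
    refine ⟨(norm_fst_le q).trans hn, (norm_fst_le q.2).trans ((norm_snd_le q).trans hn), ?_⟩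
    have h22 := (norm_snd_le q.2).trans ((norm_snd_le q).trans hn)
    simpa [Real.norm_eq_abs] using h22

lemma lintegral_sq_lt_top {α : Type*} [MeasurableSpace α] {μ : Measure α} {u : α → ℂ}
    (hu : MemLp u 2 μ) : ∫⁻ a, (‖u a‖₊ : ℝ≥0∞) ^ (2:ℝ) ∂μ < ⊤ := by
  have h := hu.2
  rw [eLpNorm_eq_lintegral_rpow_enorm_toReal (by norm_num) (by norm_num)] at h
  simp only [enorm_eq_nnnorm] at h
  have h2 : ENNReal.toReal 2 = (2:ℝ) := by norm_num
  rw [h2] at h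
  by_contra hcon
  push_neg at hcon
  rw [top_le_iff] at hcon
  rw [hcon] at h
  simp [ENNReal.top_rpow_of_pos] at h

lemma memℒp2_mul_prod {α β : Type*} [MeasureSpace α] [MeasureSpace β]
    [SigmaFinite (volume : Measure α)] [SigmaFinite (volume : Measure β)]
    {F : α → ℂ} {G : β → ℂ} (hFm : Measurable F) (hGm : Measurable G)
    (hF : MemLp F 2 volume) (hG : MemLp G 2 volume) :
    MemLp (fun w : α × β => F w.1 * G w.2) 2 volume := by
  refine ⟨((hFm.comp measurable_fst).mul (hGm.comp measurable_snd)).aestronglyMeasurable, ?_⟩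
  rw [eLpNorm_eq_lintegral_rpow_enorm_toReal (by norm_num) (by norm_num)]
  simp only [enorm_eq_nnnorm]
  refine ENNReal.rpow_lt_top_of_nonneg (by positivity) ?_
  have h2 : ENNReal.toReal 2 = (2:ℝ) := by norm_num
  rw [h2]
  have hpt : ∀ w : α × β, (‖F w.1 * G w.2‖₊ : ℝ≥0∞) ^ (2:ℝ)
      = (‖F w.1‖₊ : ℝ≥0∞) ^ (2:ℝ) * (‖G w.2‖₊ : ℝ≥0∞) ^ (2:ℝ) := by
    intro w
    rw [nnnorm_mul, ENNReal.coe_mul, ENNReal.mul_rpow_of_nonneg _ _ (by norm_num)]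
  rw [lintegral_congr hpt, Measure.volume_eq_prod,
    lintegral_prod_mul (hFm.nnnorm.coe_nnreal_ennreal.pow_const _).aemeasurable
      (hGm.nnnorm.coe_nnreal_ennreal.pow_const _).aemeasurable]
  exact (ENNReal.mul_lt_top (lintegral_sq_lt_top hF) (lintegral_sq_lt_top hG)).ne

end HeisAux

end Helpers3
section Helpers4

open Set Filter
open scoped ENNReal

namespace HeisAux

variable {n : ℕ}

/-- `ρ(q,s) = q⁻¹ ⬝ (x,y,s)`. -/
def rho (x y : Fin n → ℝ) : Heis n × ℝ → Heis n :=
  fun w => (x - w.1.1, y - w.1.2.1, w.2 - w.1.2.2 + dot w.1.1 w.1.2.1 - dot w.1.1 y)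

lemma measurable_rho (x y : Fin n → ℝ) : Measurable (rho (n := n) x y) := by
  unfold rho
  have h1 : Measurable fun w : Heis n × ℝ => w.1.1 := measurable_fst.comp measurable_fst
  have h2 : Measurable fun w : Heis n × ℝ => w.1.2.1 :=
    (measurable_fst.comp measurable_snd).comp measurable_fst
  have h3 : Measurable fun w : Heis n × ℝ => w.1.2.2 :=
    (measurable_snd.comp measurable_snd).comp measurable_fst
  refine (measurable_const.sub h1).prodMk ((measurable_const.sub h2).prodMk ?_)
  exact ((measurable_snd.sub h3).add (measurable_dot.comp (h1.prodMk h2))).sub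
    (measurable_dot.comp (h1.prodMk measurable_const))

noncomputable def Psi' (f₂ g₂ : Heis n → ℂ) (x y : Fin n → ℝ) (z : ℝ) : Heis n × ℝ → ℂ :=
  fun w => if w.2 ≤ z then f₂ w.1 * g₂ (rho x y w) else 0

lemma measurable_Psi' {f₂ g₂ : Heis n → ℂ} (hf₂m : Measurable f₂) (hg₂m : Measurable g₂)
    (x y : Fin n → ℝ) (z : ℝ) : Measurable (Psi' f₂ g₂ x y z) := by
  unfold Psi'
  exact Measurable.ite (measurableSet_le measurable_snd measurable_const)
    ((hf₂m.comp measurable_fst).mul (hg₂m.comp (measurable_rho x y))) measurable_const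

def tau (z : ℝ) : Heis n × ℝ → Heis n × ℝ :=
  fun w => ((w.1.1, w.1.2.1, w.2), z - w.1.2.2 + w.2)

/-- The second `L²` factor used to dominate `Psi'`. -/
noncomputable def F₂aux (g₂ : Heis n → ℂ) (x y : Fin n → ℝ) (Rf : ℝ) : Heis n × ℝ → ℂ :=
  fun w => (Icc (-Rf) Rf).indicator (fun _ => (1:ℂ)) w.1.2.2 * g₂ (rho x y w)

lemma memℒp_F₂aux {g₂ : Heis n → ℂ} (hg₂m : Measurable g₂) (hg₂2 : MemLp g₂ 2 volume)
    (x y : Fin n → ℝ) (Rf : ℝ) : MemLp (F₂aux g₂ x y Rf) 2 volume := by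
  have h3 : Measurable fun w : Heis n × ℝ => w.1.2.2 :=
    (measurable_snd.comp measurable_snd).comp measurable_fst
  have hFm : Measurable (F₂aux g₂ x y Rf) := by
    unfold F₂aux
    exact ((measurable_const.indicator measurableSet_Icc).comp h3).mul
      (hg₂m.comp (measurable_rho x y))
  refine ⟨hFm.aestronglyMeasurable, ?_⟩
  rw [eLpNorm_eq_lintegral_rpow_enorm_toReal (by norm_num) (by norm_num)]
  simp only [enorm_eq_nnnorm]
  refine ENNReal.rpow_lt_top_of_nonneg (by positivity) ?_
  have h2 : ENNReal.toReal 2 = (2:ℝ) := by norm_num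
  rw [h2]
  set G2 : Heis n → ℝ≥0∞ := fun q => (‖g₂ q‖₊ : ℝ≥0∞) ^ (2:ℝ) with hG2def
  have hG2m : Measurable G2 := hg₂m.nnnorm.coe_nnreal_ennreal.pow_const _
  set I : Set ℝ := Icc (-Rf) Rf with hIdef
  -- pointwise identification of the integrand
  have hpt : ∀ w : Heis n × ℝ, (‖F₂aux g₂ x y Rf w‖₊ : ℝ≥0∞) ^ (2:ℝ)
      = I.indicator (fun _ => (1:ℝ≥0∞)) w.1.2.2 * G2 (rho x y w) := by
    intro w
    by_cases hc : w.1.2.2 ∈ I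
    · simp only [F₂aux, hIdef, Set.indicator_of_mem (show w.1.2.2 ∈ Icc (-Rf) Rf from hc), one_mul, hG2def]
    · simp only [F₂aux, hIdef, Set.indicator_of_mem, Set.indicator_of_notMem (show w.1.2.2 ∉ Icc (-Rf) Rf from hc), zero_mul,
        nnnorm_zero, ENNReal.coe_zero]
      rw [ENNReal.zero_rpow_of_pos (by norm_num)]
  rw [lintegral_congr hpt]
  -- the slice integral of `G2` in the central variable
  set H : (Fin n → ℝ) × (Fin n → ℝ) → ℝ≥0∞ := fun v => ∫⁻ s : ℝ, G2 (v.1, v.2, s) with hHdef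
  have hHm : Measurable H := by
    rw [hHdef]
    have hu : Measurable (fun u : ((Fin n → ℝ) × (Fin n → ℝ)) × ℝ => G2 (u.1.1, u.1.2, u.2)) :=
      hG2m.comp ((measurable_fst.comp measurable_fst).prodMk
        ((measurable_snd.comp measurable_fst).prodMk measurable_snd))
    exact Measurable.lintegral_prod_right' hu
  have hintegrand_m : Measurable fun w : Heis n × ℝ =>
      I.indicator (fun _ => (1:ℝ≥0∞)) w.1.2.2 * G2 (rho x y w) :=
    ((measurable_const.indicator measurableSet_Icc).comp h3).mul
      (hG2m.comp (measurable_rho x y))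
  have step1 : ∫⁻ w : Heis n × ℝ, I.indicator (fun _ => (1:ℝ≥0∞)) w.1.2.2 * G2 (rho x y w)
      = ∫⁻ q : Heis n, I.indicator (fun _ => (1:ℝ≥0∞)) q.2.2 * H (x - q.1, y - q.2.1) := by
    rw [Measure.volume_eq_prod, lintegral_prod _ hintegrand_m.aemeasurable]
    refine lintegral_congr fun q => ?_
    show ∫⁻ s : ℝ, I.indicator (fun _ => (1:ℝ≥0∞)) q.2.2 * G2 (rho x y (q, s)) = _
    have hmeas_in : Measurable fun s : ℝ => G2 (rho x y (q, s)) :=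
      hG2m.comp ((measurable_rho x y).comp (measurable_const.prodMk measurable_id))
    rw [lintegral_const_mul _ hmeas_in]
    congr 1
    have harg : ∀ s : ℝ, rho (n := n) x y (q, s)
        = (x - q.1, y - q.2.1, s + (dot q.1 q.2.1 - dot q.1 y - q.2.2)) := by
      intro s
      unfold rho
      refine Prod.ext rfl (Prod.ext rfl ?_)
      show s - q.2.2 + dot q.1 q.2.1 - dot q.1 y = s + (dot q.1 q.2.1 - dot q.1 y - q.2.2)
      ring
    have hk : Measurable fun s : ℝ => G2 (x - q.1, y - q.2.1, s) :=
      hG2m.comp (measurable_const.prodMk (measurable_const.prodMk measurable_id))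
    calc ∫⁻ s : ℝ, G2 (rho x y (q, s))
        = ∫⁻ s : ℝ, G2 (x - q.1, y - q.2.1, s + (dot q.1 q.2.1 - dot q.1 y - q.2.2)) := by
          exact lintegral_congr fun s => by rw [harg s]
      _ = ∫⁻ s : ℝ, G2 (x - q.1, y - q.2.1, s) :=
          (measurePreserving_add_right volume _).lintegral_comp hk
      _ = H (x - q.1, y - q.2.1) := rfl
  rw [step1]
  have hHm2 : Measurable fun q : Heis n => I.indicator (fun _ => (1:ℝ≥0∞)) q.2.2
      * H (x - q.1, y - q.2.1) := by
    refine (((measurable_const.indicator measurableSet_Icc)).comp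
      (measurable_snd.comp measurable_snd)).mul (hHm.comp ?_)
    exact (measurable_const.sub measurable_fst).prodMk
      (measurable_const.sub (measurable_fst.comp measurable_snd))
  have step2 : ∫⁻ q : Heis n, I.indicator (fun _ => (1:ℝ≥0∞)) q.2.2 * H (x - q.1, y - q.2.1)
      = (∫⁻ v : (Fin n → ℝ) × (Fin n → ℝ), H v) * volume I := by
    rw [Measure.volume_eq_prod, lintegral_prod _ hHm2.aemeasurable]
    have inner_eq : ∀ a : Fin n → ℝ,
        (∫⁻ bc : (Fin n → ℝ) × ℝ, I.indicator (fun _ => (1:ℝ≥0∞)) bc.2 * H (x - a, y - bc.1))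
        = (∫⁻ b : Fin n → ℝ, H (x - a, b)) * volume I := by
      intro a
      rw [Measure.volume_eq_prod, lintegral_prod]
      · have hbc : ∀ b : Fin n → ℝ,
            (∫⁻ c : ℝ, I.indicator (fun _ => (1:ℝ≥0∞)) c * H (x - a, y - b))
            = H (x - a, y - b) * volume I := by
          intro b
          have : ∀ c : ℝ, I.indicator (fun _ => (1:ℝ≥0∞)) c * H (x - a, y - b)
              = I.indicator (fun _ => H (x - a, y - b)) c := by
            intro c
            by_cases hc : c ∈ I
            · simp [Set.indicator_of_mem hc]
            · simp [Set.indicator_of_notMem hc]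
          rw [lintegral_congr this, lintegral_indicator_const measurableSet_Icc]
        rw [lintegral_congr hbc]
        have hmb : Measurable fun b : Fin n → ℝ => H (x - a, y - b) :=
          hHm.comp (measurable_const.prodMk (measurable_const.sub measurable_id))
        rw [lintegral_mul_const _ hmb]
        congr 1
        exact (Measure.measurePreserving_sub_left volume y).lintegral_comp
          (hHm.comp (measurable_const.prodMk measurable_id))
      · refine Measurable.aemeasurable ?_
        exact ((measurable_const.indicator measurableSet_Icc).comp measurable_snd).mul
          (hHm.comp (measurable_const.prodMk (measurable_const.sub measurable_fst)))
    rw [lintegral_congr inner_eq]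
    have hma : Measurable fun a : Fin n → ℝ => ∫⁻ b : Fin n → ℝ, H (x - a, b) := by
      have hu : Measurable (fun u : (Fin n → ℝ) × (Fin n → ℝ) => H (x - u.1, u.2)) :=
        hHm.comp ((measurable_const.sub measurable_fst).prodMk measurable_snd)
      exact Measurable.lintegral_prod_right' hu
    rw [lintegral_mul_const _ hma]
    congr 1
    have hma2 : Measurable fun a : Fin n → ℝ => ∫⁻ b : Fin n → ℝ, H (a, b) := by
      have hu : Measurable (fun u : (Fin n → ℝ) × (Fin n → ℝ) => H (u.1, u.2)) :=
        hHm.comp (measurable_fst.prodMk measurable_snd)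
      exact Measurable.lintegral_prod_right' hu
    calc ∫⁻ a : Fin n → ℝ, ∫⁻ b : Fin n → ℝ, H (x - a, b)
        = ∫⁻ a : Fin n → ℝ, ∫⁻ b : Fin n → ℝ, H (a, b) :=
          (Measure.measurePreserving_sub_left volume x).lintegral_comp hma2
      _ = ∫⁻ v : (Fin n → ℝ) × (Fin n → ℝ), H v := by
          rw [Measure.volume_eq_prod, lintegral_prod _ hHm.aemeasurable]
  rw [step2]
  have step3 : (∫⁻ v : (Fin n → ℝ) × (Fin n → ℝ), H v) = ∫⁻ q : Heis n, G2 q := by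
    have hmp : MeasurePreserving
        (⇑(MeasurableEquiv.prodAssoc : ((Fin n → ℝ) × (Fin n → ℝ)) × ℝ ≃ᵐ Heis n))
        volume volume := volume_preserving_prodAssoc
    have humeas : Measurable (fun u : ((Fin n → ℝ) × (Fin n → ℝ)) × ℝ => G2 (u.1.1, u.1.2, u.2)) :=
      hG2m.comp ((measurable_fst.comp measurable_fst).prodMk
        ((measurable_snd.comp measurable_fst).prodMk measurable_snd))
    have hu : ∫⁻ u : ((Fin n → ℝ) × (Fin n → ℝ)) × ℝ, G2 (u.1.1, u.1.2, u.2)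
        = ∫⁻ v : (Fin n → ℝ) × (Fin n → ℝ), ∫⁻ s : ℝ, G2 (v.1, v.2, s) := by
      rw [Measure.volume_eq_prod]
      exact lintegral_prod _ humeas.aemeasurable
    calc ∫⁻ v : (Fin n → ℝ) × (Fin n → ℝ), H v
        = ∫⁻ u : ((Fin n → ℝ) × (Fin n → ℝ)) × ℝ, G2 (u.1.1, u.1.2, u.2) := by
          rw [hu]
      _ = ∫⁻ q : Heis n, G2 q := by exact hmp.lintegral_comp hG2m
  rw [step3]
  have hfin : ∫⁻ q : Heis n, G2 q < ⊤ := lintegral_sq_lt_top hg₂2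
  have hIfin : volume I ≠ ⊤ := by
    rw [hIdef, Real.volume_Icc]
    exact ENNReal.ofReal_ne_top
  exact (ENNReal.mul_lt_top hfin (lt_top_iff_ne_top.mpr hIfin)).ne

end HeisAux

end Helpers4
section Helpers5

open Set Filter
open scoped ENNReal

namespace HeisAux

variable {n : ℕ}

lemma integrable_Psi' {f₂ g₂ : Heis n → ℂ} (hf₂m : Measurable f₂) (hg₂m : Measurable g₂)
    (hf₂2 : MemLp f₂ 2 volume) (hg₂2 : MemLp g₂ 2 volume) {Rf Rg : ℝ}
    (hfs : ∀ q : Heis n, f₂ q ≠ 0 → ‖q.1‖ ≤ Rf ∧ ‖q.2.1‖ ≤ Rf ∧ |q.2.2| ≤ Rf)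
    (hgs : ∀ q : Heis n, g₂ q ≠ 0 → |q.2.2| ≤ Rg)
    (x y : Fin n → ℝ) (z : ℝ) : Integrable (Psi' f₂ g₂ x y z) volume := by
  set M : ℝ := Rg + Rf + ((n : ℝ) * (Rf * Rf) + (n : ℝ) * (Rf * ‖y‖)) with hM
  set F₁ : Heis n × ℝ → ℂ := fun w => f₂ w.1 * (Icc (-M) z).indicator (fun _ => (1:ℂ)) w.2
    with hF₁
  have hkm : Measurable ((Icc (-M) z).indicator (fun _ => (1:ℂ))) :=
    measurable_const.indicator measurableSet_Icc
  have hF₁mem : MemLp F₁ 2 volume :=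
    memℒp2_mul_prod hf₂m hkm hf₂2 (memLp_indicator_const 2 measurableSet_Icc 1
      (Or.inr (by rw [Real.volume_Icc]; exact ENNReal.ofReal_ne_top)))
  have hF₂mem : MemLp (F₂aux g₂ x y Rf) 2 volume := memℒp_F₂aux hg₂m hg₂2 x y Rf
  have hprod : Integrable (fun w => F₁ w * F₂aux g₂ x y Rf w) volume := by
    have hpqr : (1 : ℝ≥0∞) / 1 = 1 / 2 + 1 / 2 := by
      rw [ENNReal.add_halves, one_div_one]
    have hsmul := hF₂mem.smul (r := 1) hF₁mem (hpqr := ⟨by rw [inv_one, ENNReal.inv_two_add_inv_two]⟩)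
    have := memLp_one_iff_integrable.mp hsmul
    simpa [Pi.smul_apply, smul_eq_mul, Pi.mul_def] using this
  refine Integrable.mono' hprod.norm
    (measurable_Psi' hf₂m hg₂m x y z).aestronglyMeasurable
    (Eventually.of_forall fun w => ?_)
  show ‖Psi' f₂ g₂ x y z w‖ ≤ ‖F₁ w * F₂aux g₂ x y Rf w‖
  by_cases hs : w.2 ≤ z
  · have hPsi : Psi' f₂ g₂ x y z w = f₂ w.1 * g₂ (rho x y w) := if_pos hs
    rw [hPsi]
    by_cases hf0 : f₂ w.1 = 0
    · simp only [hf0, zero_mul, norm_zero]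
      positivity
    by_cases hg0 : g₂ (rho x y w) = 0
    · simp only [hg0, mul_zero, norm_zero]
      positivity
    obtain ⟨ha, hb, hc⟩ := hfs w.1 hf0
    have hzc' : |w.2 - w.1.2.2 + dot w.1.1 w.1.2.1 - dot w.1.1 y| ≤ Rg := hgs (rho x y w) hg0
    have hRf0 : (0:ℝ) ≤ Rf := le_trans (norm_nonneg _) ha
    have hd1 := abs_dot_le w.1.1 w.1.2.1
    have hd2 := abs_dot_le w.1.1 y
    have e1 : (n:ℝ) * (‖w.1.1‖ * ‖w.1.2.1‖) ≤ (n:ℝ) * (Rf * Rf) :=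
      mul_le_mul_of_nonneg_left (mul_le_mul ha hb (norm_nonneg _) hRf0) (Nat.cast_nonneg n)
    have e2 : (n:ℝ) * (‖w.1.1‖ * ‖y‖) ≤ (n:ℝ) * (Rf * ‖y‖) :=
      mul_le_mul_of_nonneg_left (mul_le_mul_of_nonneg_right ha (norm_nonneg _))
        (Nat.cast_nonneg n)
    have hmem1 : w.2 ∈ Icc (-M) z := by
      refine ⟨?_, hs⟩
      have h1 := (abs_le.mp hzc').1
      have h2 := (abs_le.mp hc).1
      have h3 : dot w.1.1 w.1.2.1 ≤ (n:ℝ) * (Rf * Rf) :=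
        le_trans (le_abs_self _) (le_trans hd1 e1)
      have h4 : -((n:ℝ) * (Rf * ‖y‖)) ≤ dot w.1.1 y := by
        have hna := neg_abs_le (dot w.1.1 y)
        linarith
      rw [hM]
      linarith
    have hmem2 : w.1.2.2 ∈ Icc (-Rf) Rf := by
      have := abs_le.mp hc
      exact ⟨this.1, this.2⟩
    have heq : F₁ w * F₂aux g₂ x y Rf w = f₂ w.1 * g₂ (rho x y w) := by
      simp only [hF₁, F₂aux, Set.indicator_of_mem hmem1, Set.indicator_of_mem hmem2]
      ring
    rw [heq]
  · have hPsi : Psi' f₂ g₂ x y z w = 0 := if_neg hs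
    rw [hPsi]
    simp only [norm_zero, norm_mul]
    positivity

lemma key_pointwise {f₂ g₂ : Heis n → ℂ} (hf₂m : Measurable f₂) (hg₂m : Measurable g₂)
    (hf₂2 : MemLp f₂ 2 volume) (hg₂2 : MemLp g₂ 2 volume) {Rf Rg : ℝ}
    (hfs : ∀ q : Heis n, f₂ q ≠ 0 → ‖q.1‖ ≤ Rf ∧ ‖q.2.1‖ ≤ Rf ∧ |q.2.2| ≤ Rf)
    (hgs : ∀ q : Heis n, g₂ q ≠ 0 → |q.2.2| ≤ Rg)
    (x y : Fin n → ℝ) (z : ℝ) :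
    hconv (T f₂) g₂ (x, y, z) = T (hconv f₂ g₂) (x, y, z) := by
  have hΨ'int : Integrable (Psi' f₂ g₂ x y z) volume :=
    integrable_Psi' hf₂m hg₂m hf₂2 hg₂2 hfs hgs x y z
  have hΨ'm := measurable_Psi' hf₂m hg₂m x y z
  have hτ : MeasurePreserving (tau (n := n) z) volume volume := mp_tau z
  have hΨint : Integrable (fun w : Heis n × ℝ => Psi' f₂ g₂ x y z (tau z w)) volume := by
    have h1 : Integrable (Psi' f₂ g₂ x y z) (Measure.map (tau z) volume) := by
      rw [hτ.map_eq]; exact hΨ'int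
    exact (integrable_map_measure (by rw [hτ.map_eq]; exact hΨ'm.aestronglyMeasurable)
      hτ.aemeasurable).mp h1
  calc hconv (T f₂) g₂ (x, y, z)
      = ∫ q : Heis n, T f₂ q * g₂ (rho x y (q, z)) := rfl
    _ = ∫ q : Heis n, ∫ t : ℝ, Psi' f₂ g₂ x y z (tau z (q, t)) := by
        refine integral_congr_ae (ae_of_all _ fun q => ?_)
        show T f₂ q * g₂ (rho x y (q, z)) = ∫ t : ℝ, Psi' f₂ g₂ x y z (tau z (q, t))
        have hpt : ∀ t : ℝ, Psi' f₂ g₂ x y z (tau z (q, t))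
            = (Iic q.2.2).indicator (fun t => f₂ (q.1, q.2.1, t)) t * g₂ (rho x y (q, z)) := by
          intro t
          show (if z - q.2.2 + t ≤ z then
              f₂ (q.1, q.2.1, t) *
                g₂ (x - q.1, y - q.2.1, z - q.2.2 + t - t + dot q.1 q.2.1 - dot q.1 y)
            else 0) = _
          have harg : z - q.2.2 + t - t + dot q.1 q.2.1 - dot q.1 y
              = z - q.2.2 + dot q.1 q.2.1 - dot q.1 y := by ring
          rw [harg]
          by_cases ht : t ≤ q.2.2
          · rw [if_pos (by linarith), Set.indicator_of_mem (mem_Iic.mpr ht)]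
            rfl
          · rw [if_neg (fun h => ht (by linarith)),
              Set.indicator_of_notMem (by simpa using ht), zero_mul]
        rw [funext hpt, integral_mul_const, integral_indicator measurableSet_Iic]
        rfl
    _ = ∫ w : Heis n × ℝ, Psi' f₂ g₂ x y z (tau z w) := by
        have h := integral_prod (μ := (volume : Measure (Heis n))) (ν := (volume : Measure ℝ))
          (fun w : Heis n × ℝ => Psi' f₂ g₂ x y z (tau z w))
          (by rw [← Measure.volume_eq_prod]; exact hΨint)
        rw [← Measure.volume_eq_prod] at h
        exact h.symm
    _ = ∫ w : Heis n × ℝ, Psi' f₂ g₂ x y z w := by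
        calc ∫ w : Heis n × ℝ, Psi' f₂ g₂ x y z (tau z w)
            = ∫ w, Psi' f₂ g₂ x y z w ∂(Measure.map (tau z) volume) :=
              (integral_map hτ.aemeasurable
                (by rw [hτ.map_eq]; exact hΨ'm.aestronglyMeasurable)).symm
          _ = ∫ w : Heis n × ℝ, Psi' f₂ g₂ x y z w := by rw [hτ.map_eq]
    _ = ∫ t : ℝ, ∫ q : Heis n, Psi' f₂ g₂ x y z (q, t) := by
        have h := integral_prod_symm (μ := (volume : Measure (Heis n)))
          (ν := (volume : Measure ℝ)) (Psi' f₂ g₂ x y z)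
          (by rw [← Measure.volume_eq_prod]; exact hΨ'int)
        rw [← Measure.volume_eq_prod] at h
        exact h
    _ = ∫ t in Iic z, hconv f₂ g₂ (x, y, t) := by
        have hpt : ∀ t : ℝ, (∫ q : Heis n, Psi' f₂ g₂ x y z (q, t))
            = (Iic z).indicator (fun t => hconv f₂ g₂ (x, y, t)) t := by
          intro t
          by_cases ht : t ≤ z
          · rw [Set.indicator_of_mem (mem_Iic.mpr ht)]
            exact integral_congr_ae (ae_of_all _ fun q => if_pos ht)
          · rw [Set.indicator_of_notMem (by simpa using ht)]
            have h0 : ∀ q : Heis n, Psi' f₂ g₂ x y z (q, t) = 0 := fun q => if_neg ht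
            simp only [h0, integral_zero]
        rw [funext hpt, integral_indicator measurableSet_Iic]
    _ = T (hconv f₂ g₂) (x, y, z) := rfl

end HeisAux

end Helpers5
/-- For compactly supported `f, g ∈ L²(H_n)` with `Sf = 0` a.e.,
`(Tf) *_H g = T(f *_H g)` a.e. on `H_n`. -/
theorem hconv_T_left (n : ℕ) (hn : 1 ≤ n) (f g : Heis n → ℂ)
    (hf : MemLp f 2 volume) (hg : MemLp g 2 volume)
    (hfc : AECompactlySupported f) (hgc : AECompactlySupported g)
    (hSf : S f =ᵐ[volume] 0) :
    hconv (T f) g =ᵐ[volume] T (hconv f g) := by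
  classical
  obtain ⟨f₂, Rf, hf₂m, hf₂ae, hfs⟩ := HeisAux.good_repr hf hfc
  obtain ⟨g₂, Rg, hg₂m, hg₂ae, hgs⟩ := HeisAux.good_repr hg hgc
  have hf₂2 : MemLp f₂ 2 volume := hf.ae_eq hf₂ae.symm
  have hg₂2 : MemLp g₂ 2 volume := hg.ae_eq hg₂ae.symm
  have hgs' : ∀ q : Heis n, g₂ q ≠ 0 → |q.2.2| ≤ Rg := fun q hq => (hgs q hq).2.2
  have hTf : T f =ᵐ[volume] T f₂ := HeisAux.T_congr_ae hf₂ae.symm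
  have h1 : ∀ p : Heis n, hconv (T f) g p = hconv (T f₂) g₂ p := by
    intro p
    refine integral_congr_ae ?_
    have hg' : (fun q : Heis n =>
        g (p.1 - q.1, p.2.1 - q.2.1, p.2.2 - q.2.2 + dot q.1 q.2.1 - dot q.1 p.2.1))
        =ᵐ[volume] (fun q : Heis n =>
        g₂ (p.1 - q.1, p.2.1 - q.2.1, p.2.2 - q.2.2 + dot q.1 q.2.1 - dot q.1 p.2.1)) :=
      (HeisAux.mp_sigma p.1 p.2.1 p.2.2).quasiMeasurePreserving.ae_eq hg₂ae.symm
    filter_upwards [hTf, hg'] with q e1 e2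
    rw [e1, e2]
  have h2 : ∀ p : Heis n, hconv f g p = hconv f₂ g₂ p := by
    intro p
    refine integral_congr_ae ?_
    have hg' : (fun q : Heis n =>
        g (p.1 - q.1, p.2.1 - q.2.1, p.2.2 - q.2.2 + dot q.1 q.2.1 - dot q.1 p.2.1))
        =ᵐ[volume] (fun q : Heis n =>
        g₂ (p.1 - q.1, p.2.1 - q.2.1, p.2.2 - q.2.2 + dot q.1 q.2.1 - dot q.1 p.2.1)) :=
      (HeisAux.mp_sigma p.1 p.2.1 p.2.2).quasiMeasurePreserving.ae_eq hg₂ae.symm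
    filter_upwards [hf₂ae.symm, hg'] with q e1 e2
    rw [e1, e2]
  refine Filter.Eventually.of_forall fun p => ?_
  rw [h1 p]
  have hkey := HeisAux.key_pointwise hf₂m.measurable hg₂m.measurable hf₂2 hg₂2 hfs hgs'
    p.1 p.2.1 p.2.2
  have hp : ((p.1, p.2.1, p.2.2) : Heis n) = p := rfl
  rw [hp] at hkey
  rw [hkey]
  show T (hconv f₂ g₂) p = T (hconv f g) p
  exact integral_congr_ae (Filter.Eventually.of_forall fun t => (h2 _).symm)
end

section
/- Let n ≥ 1 and let f, g ∈ L²(H_n; ℂ) be compactly supported with Sg = 0 almost everywhere on ℝ^{2n}. Then f *_H (Tg) = T(f *_H g) almost everywhere on H_n. -/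
open MeasureTheory Measure
open scoped ENNReal NNReal

namespace HconvAux

open Measure Function Set

variable {n : ℕ}

lemma measurable_dot : Measurable fun ab : (Fin n → ℝ) × (Fin n → ℝ) => dot ab.1 ab.2 := by
  unfold dot
  exact Finset.measurable_sum _ fun i _ =>
    ((measurable_pi_apply i).comp measurable_fst).mul ((measurable_pi_apply i).comp measurable_snd)

lemma mp_assoc (n : ℕ) :
    MeasurePreserving
      (MeasurableEquiv.prodAssoc : ((Fin n → ℝ) × (Fin n → ℝ)) × ℝ ≃ᵐ Heis n)
      volume volume := by
  have := measurePreserving_prodAssoc (volume : Measure (Fin n → ℝ))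
    (volume : Measure (Fin n → ℝ)) (volume : Measure ℝ)
  rw [show (volume : Measure (((Fin n → ℝ) × (Fin n → ℝ)) × ℝ))
      = ((volume : Measure (Fin n → ℝ)).prod volume).prod volume by
    rw [volume_eq_prod, volume_eq_prod]]
  rw [show (volume : Measure (Heis n))
      = (volume : Measure (Fin n → ℝ)).prod ((volume : Measure (Fin n → ℝ)).prod volume) by
    rw [volume_eq_prod, volume_eq_prod]]
  exact this

lemma ae_lift (P : (Fin n → ℝ) × (Fin n → ℝ) → Prop)
    (h : ∀ᵐ xy ∂(volume : Measure ((Fin n → ℝ) × (Fin n → ℝ))), P xy) :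
    ∀ᵐ p ∂(volume : Measure (Heis n)), P (p.1, p.2.1) := by
  have h1 : Measure.QuasiMeasurePreserving
      (Prod.fst : ((Fin n → ℝ) × (Fin n → ℝ)) × ℝ → (Fin n → ℝ) × (Fin n → ℝ))
      volume volume := by
    rw [volume_eq_prod]
    exact Measure.quasiMeasurePreserving_fst
  have h2 : Measure.QuasiMeasurePreserving
      (fun p : Heis n => (p.1, p.2.1)) volume volume :=
    h1.comp ((mp_assoc n).symm MeasurableEquiv.prodAssoc).quasiMeasurePreserving
  exact h2.tendsto_ae.eventually h

lemma leftInv_VV (n : ℕ) :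
    IsAddLeftInvariant (volume : Measure ((Fin n → ℝ) × (Fin n → ℝ))) := by
  rw [volume_eq_prod]; infer_instance

lemma sigma_mp (p : Heis n) :
    MeasurePreserving (fun q : Heis n =>
      ((p.1 - q.1, p.2.1 - q.2.1, p.2.2 - q.2.2 + dot q.1 q.2.1 - dot q.1 p.2.1) : Heis n))
      volume volume := by
  have hbase : MeasurePreserving (fun a : Fin n → ℝ => p.1 - a) volume volume :=
    measurePreserving_sub_left volume p.1
  have hfib : ∀ a : Fin n → ℝ, MeasurePreserving
      (fun bc : (Fin n → ℝ) × ℝ => ((p.2.1 - bc.1, p.2.2 - bc.2 + dot a bc.1 - dot a p.2.1)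
        : (Fin n → ℝ) × ℝ)) volume volume := by
    intro a
    have h1 : MeasurePreserving (fun b : Fin n → ℝ => p.2.1 - b) volume volume :=
      measurePreserving_sub_left volume p.2.1
    have h2 : ∀ b : Fin n → ℝ,
        MeasurePreserving (fun c : ℝ => p.2.2 - c + dot a b - dot a p.2.1) volume volume := by
      intro b
      have he : (fun c : ℝ => p.2.2 - c + dot a b - dot a p.2.1)
          = fun c => (p.2.2 + dot a b - dot a p.2.1) - c := by funext c; ring
      rw [he]
      exact measurePreserving_sub_left volume _
    have hm : Measurable (Function.uncurry
        fun (b : Fin n → ℝ) (c : ℝ) => p.2.2 - c + dot a b - dot a p.2.1) := by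
      apply Measurable.sub
      · apply Measurable.add
        · exact measurable_const.sub measurable_snd
        · exact (measurable_dot (n := n)).comp (measurable_const.prodMk measurable_fst)
      · exact measurable_const
    have := h1.skew_product (g := fun b c => p.2.2 - c + dot a b - dot a p.2.1) hm
      (ae_of_all _ fun b => (h2 b).map_eq)
    rw [volume_eq_prod]
    exact this
  have hm2 : Measurable (Function.uncurry
      fun (a : Fin n → ℝ) (bc : (Fin n → ℝ) × ℝ) =>
        ((p.2.1 - bc.1, p.2.2 - bc.2 + dot a bc.1 - dot a p.2.1) : (Fin n → ℝ) × ℝ)) := by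
    apply Measurable.prodMk
    · exact measurable_const.sub (measurable_fst.comp measurable_snd)
    · apply Measurable.sub
      · apply Measurable.add
        · exact measurable_const.sub ((measurable_snd.comp measurable_snd))
        · exact (measurable_dot (n := n)).comp
            (measurable_fst.prodMk (measurable_fst.comp measurable_snd))
      · exact (measurable_dot (n := n)).comp (measurable_fst.prodMk measurable_const)
  have := hbase.skew_product
    (g := fun (a : Fin n → ℝ) (bc : (Fin n → ℝ) × ℝ) =>
      ((p.2.1 - bc.1, p.2.2 - bc.2 + dot a bc.1 - dot a p.2.1) : (Fin n → ℝ) × ℝ)) hm2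
    (ae_of_all _ fun a => by
      rw [show (volume : Measure ((Fin n → ℝ) × ℝ)) = (volume : Measure (Fin n → ℝ)).prod volume
        from volume_eq_prod _ _] at *
      exact (hfib a).map_eq)
  rw [show (volume : Measure (Heis n))
      = (volume : Measure (Fin n → ℝ)).prod (volume : Measure ((Fin n → ℝ) × ℝ)) by
    rw [volume_eq_prod]]
  rw [show (volume : Measure ((Fin n → ℝ) × ℝ)) = (volume : Measure (Fin n → ℝ)).prod volume
    from volume_eq_prod _ _]
  exact this

lemma shift_Iic (h : ℝ → ℂ) (z d : ℝ) :
    ∫ t in Set.Iic (z - d), h t = ∫ s in Set.Iic z, h (s - d) := by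
  rw [← integral_indicator measurableSet_Iic, ← integral_indicator measurableSet_Iic,
    ← integral_sub_right_eq_self (Set.indicator (Set.Iic (z - d)) h) d]
  congr 1
  funext s
  simp only [Set.indicator_apply, Set.mem_Iic, sub_le_sub_iff_right]

lemma integrable_of_L2 {f : Heis n → ℂ} (hf : MemLp f 2 volume)
    (hfc : AECompactlySupported f) : Integrable f volume := by
  obtain ⟨K, hK, hKf⟩ := hfc
  have hKm : MeasurableSet K := hK.measurableSet
  have h1 : f =ᵐ[volume] K.indicator f := by
    filter_upwards [hKf] with p hp
    by_cases h : p ∈ K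
    · simp [Set.indicator_apply, h]
    · simp [Set.indicator_apply, h, hp h]
  haveI : IsFiniteMeasure (volume.restrict K) :=
    ⟨by simpa [Measure.restrict_apply_univ] using hK.measure_lt_top⟩
  have h2 : MemLp f 1 (volume.restrict K) :=
    (hf.restrict K).mono_exponent (by norm_num)
  have h3 : IntegrableOn f K volume := memLp_one_iff_integrable.mp h2
  exact ((integrable_indicator_iff hKm).mpr h3).congr h1.symm

lemma key (n : ℕ) (f g : Heis n → ℂ) (hfm : Measurable f) (hgm : Measurable g)
    (hf1 : Integrable f volume) (hg1 : Integrable g volume) :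
    hconv f (T g) =ᵐ[volume] T (hconv f g) := by
  haveI : IsAddLeftInvariant (volume : Measure ((Fin n → ℝ) × (Fin n → ℝ))) := leftInv_VV n
  set G1 : (Fin n → ℝ) × (Fin n → ℝ) → ℝ≥0∞ :=
    fun uv => ∫⁻ t : ℝ, (‖g (uv.1, uv.2, t)‖₊ : ℝ≥0∞) with hG1def
  set F1 : (Fin n → ℝ) × (Fin n → ℝ) → ℝ≥0∞ :=
    fun ab => ∫⁻ c : ℝ, (‖f (ab.1, ab.2, c)‖₊ : ℝ≥0∞) with hF1def
  have hgm3 : Measurable (fun r : ((Fin n → ℝ) × (Fin n → ℝ)) × ℝ =>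
      (‖g (r.1.1, r.1.2, r.2)‖₊ : ℝ≥0∞)) :=
    (hgm.comp (((measurable_fst.comp measurable_fst)).prodMk
      ((measurable_snd.comp measurable_fst).prodMk measurable_snd))).nnnorm.coe_nnreal_ennreal
  have hfm3 : Measurable (fun r : ((Fin n → ℝ) × (Fin n → ℝ)) × ℝ =>
      (‖f (r.1.1, r.1.2, r.2)‖₊ : ℝ≥0∞)) :=
    (hfm.comp (((measurable_fst.comp measurable_fst)).prodMk
      ((measurable_snd.comp measurable_fst).prodMk measurable_snd))).nnnorm.coe_nnreal_ennreal
  have hG1m : Measurable G1 := hgm3.lintegral_prod_right'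
  have hF1m : Measurable F1 := hfm3.lintegral_prod_right'
  -- finiteness of the total integrals of F1 and G1
  have hassoc : ∀ (h : Heis n → ℂ), Measurable h →
      ∫⁻ xy, (∫⁻ t : ℝ, (‖h (xy.1, xy.2, t)‖₊ : ℝ≥0∞))
        ∂(volume : Measure ((Fin n → ℝ) × (Fin n → ℝ)))
      = ∫⁻ q, (‖h q‖₊ : ℝ≥0∞) ∂(volume : Measure (Heis n)) := by
    intro h hm
    have hm2 : Measurable fun r : ((Fin n → ℝ) × (Fin n → ℝ)) × ℝ =>
        (‖h (MeasurableEquiv.prodAssoc r)‖₊ : ℝ≥0∞) :=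
      hm.nnnorm.coe_nnreal_ennreal.comp (mp_assoc n).measurable
    calc ∫⁻ xy, (∫⁻ t : ℝ, (‖h (xy.1, xy.2, t)‖₊ : ℝ≥0∞))
          ∂(volume : Measure ((Fin n → ℝ) × (Fin n → ℝ)))
        = ∫⁻ r, (‖h (MeasurableEquiv.prodAssoc r)‖₊ : ℝ≥0∞)
            ∂((volume : Measure ((Fin n → ℝ) × (Fin n → ℝ))).prod volume) :=
          (lintegral_prod _ hm2.aemeasurable).symm
      _ = ∫⁻ q, (‖h q‖₊ : ℝ≥0∞) ∂(volume : Measure (Heis n)) :=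
          (mp_assoc n).lintegral_comp hm.nnnorm.coe_nnreal_ennreal
  have hGint : ∫⁻ uv, G1 uv ∂(volume : Measure ((Fin n → ℝ) × (Fin n → ℝ))) ≠ ⊤ := by
    rw [hG1def, hassoc g hgm]
    exact hg1.2.ne
  have hFint : ∫⁻ ab, F1 ab ∂(volume : Measure ((Fin n → ℝ) × (Fin n → ℝ))) ≠ ⊤ := by
    rw [hF1def, hassoc f hfm]
    exact hf1.2.ne
  -- the dominating convolution-type function W
  set W : (Fin n → ℝ) × (Fin n → ℝ) → ℝ≥0∞ :=
    fun xy => ∫⁻ ab, F1 ab * G1 (xy.1 - ab.1, xy.2 - ab.2)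
      ∂(volume : Measure ((Fin n → ℝ) × (Fin n → ℝ))) with hWdef
  have hWker : Measurable (fun r : ((Fin n → ℝ) × (Fin n → ℝ)) × ((Fin n → ℝ) × (Fin n → ℝ)) =>
      F1 r.2 * G1 (r.1.1 - r.2.1, r.1.2 - r.2.2)) := by
    apply Measurable.mul
    · exact hF1m.comp measurable_snd
    · exact hG1m.comp (((measurable_fst.comp measurable_fst).sub
        (measurable_fst.comp measurable_snd)).prodMk
        ((measurable_snd.comp measurable_fst).sub (measurable_snd.comp measurable_snd)))
  have hWm : Measurable W := hWker.lintegral_prod_right'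
  have hWfin : ∫⁻ xy, W xy ∂(volume : Measure ((Fin n → ℝ) × (Fin n → ℝ))) ≠ ⊤ := by
    have h2 : ∀ ab : (Fin n → ℝ) × (Fin n → ℝ),
        ∫⁻ xy, F1 ab * G1 (xy.1 - ab.1, xy.2 - ab.2)
          ∂(volume : Measure ((Fin n → ℝ) × (Fin n → ℝ)))
        = F1 ab * ∫⁻ uv, G1 uv ∂(volume : Measure ((Fin n → ℝ) × (Fin n → ℝ))) := by
      intro ab
      rw [lintegral_const_mul _ (show Measurable fun xy : (Fin n → ℝ) × (Fin n → ℝ) =>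
        G1 (xy.1 - ab.1, xy.2 - ab.2) from hG1m.comp
          ((measurable_fst.sub measurable_const).prodMk
            (measurable_snd.sub measurable_const)))]
      congr 1
      have hmp : MeasurePreserving (fun xy : (Fin n → ℝ) × (Fin n → ℝ) => xy - ab)
          volume volume := measurePreserving_sub_right volume ab
      rw [← hmp.lintegral_comp hG1m]
      exact lintegral_congr fun xy => rfl
    have hcalc : ∫⁻ xy, W xy ∂(volume : Measure ((Fin n → ℝ) × (Fin n → ℝ)))
        = (∫⁻ ab, F1 ab ∂(volume : Measure ((Fin n → ℝ) × (Fin n → ℝ))))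
          * ∫⁻ uv, G1 uv ∂(volume : Measure ((Fin n → ℝ) × (Fin n → ℝ))) := by
      calc ∫⁻ xy, W xy ∂(volume : Measure ((Fin n → ℝ) × (Fin n → ℝ)))
          = ∫⁻ ab, ∫⁻ xy, F1 ab * G1 (xy.1 - ab.1, xy.2 - ab.2)
              ∂(volume : Measure ((Fin n → ℝ) × (Fin n → ℝ)))
              ∂(volume : Measure ((Fin n → ℝ) × (Fin n → ℝ))) :=
            lintegral_lintegral_swap hWker.aemeasurable
        _ = ∫⁻ ab, F1 ab * ∫⁻ uv, G1 uv ∂(volume : Measure ((Fin n → ℝ) × (Fin n → ℝ)))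
              ∂(volume : Measure ((Fin n → ℝ) × (Fin n → ℝ))) := lintegral_congr h2
        _ = (∫⁻ ab, F1 ab ∂(volume : Measure ((Fin n → ℝ) × (Fin n → ℝ))))
              * ∫⁻ uv, G1 uv ∂(volume : Measure ((Fin n → ℝ) × (Fin n → ℝ))) :=
            lintegral_mul_const _ hF1m
    rw [hcalc]
    exact ENNReal.mul_ne_top hFint hGint
  have hW : ∀ᵐ xy ∂(volume : Measure ((Fin n → ℝ) × (Fin n → ℝ))), W xy < ⊤ :=
    ae_lt_top hWm hWfin
  have hWp : ∀ᵐ p ∂(volume : Measure (Heis n)), W (p.1, p.2.1) < ⊤ :=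
    ae_lift (fun xy => W xy < ⊤) hW
  filter_upwards [hWp] with p hp
  -- the inner translation bound
  have hinner : ∀ (u v : Fin n → ℝ) (d : ℝ),
      (∫⁻ s in Set.Iic p.2.2, (‖g (u, v, s - d)‖₊ : ℝ≥0∞)) ≤ G1 (u, v) := by
    intro u v d
    refine le_trans (lintegral_mono' Measure.restrict_le_self le_rfl) (le_of_eq ?_)
    exact (measurePreserving_sub_right volume d).lintegral_comp
      (f := fun t : ℝ => (‖g (u, v, t)‖₊ : ℝ≥0∞))
      (hgm.comp ((measurable_const (a := u)).prodMk
        ((measurable_const (a := v)).prodMk measurable_id))).nnnorm.coe_nnreal_ennreal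
  -- measurability of the main kernel
  have hmeas2 : Measurable (fun qs : Heis n × ℝ =>
      f qs.1 * g (p.1 - qs.1.1, p.2.1 - qs.1.2.1,
        qs.2 - qs.1.2.2 + dot qs.1.1 qs.1.2.1 - dot qs.1.1 p.2.1)) := by
    apply Measurable.mul
    · exact hfm.comp measurable_fst
    · apply hgm.comp
      apply Measurable.prodMk
      · exact measurable_const.sub (measurable_fst.comp measurable_fst)
      · apply Measurable.prodMk
        · exact measurable_const.sub ((measurable_fst.comp measurable_snd).comp measurable_fst)
        · apply Measurable.sub
          · apply Measurable.add
            · exact measurable_snd.sub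
                ((measurable_snd.comp measurable_snd).comp measurable_fst)
            · exact (measurable_dot (n := n)).comp
                (((measurable_fst.comp measurable_fst)).prodMk
                  ((measurable_fst.comp measurable_snd).comp measurable_fst))
          · exact (measurable_dot (n := n)).comp
              ((measurable_fst.comp measurable_fst).prodMk measurable_const)
  -- integrability of the main kernel
  have hint : Integrable (fun qs : Heis n × ℝ =>
      f qs.1 * g (p.1 - qs.1.1, p.2.1 - qs.1.2.1,
        qs.2 - qs.1.2.2 + dot qs.1.1 qs.1.2.1 - dot qs.1.1 p.2.1))
      ((volume : Measure (Heis n)).prod (volume.restrict (Set.Iic p.2.2))) := by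
    refine ⟨hmeas2.aestronglyMeasurable, ?_⟩
    show (∫⁻ qs, (‖f qs.1 * g (p.1 - qs.1.1, p.2.1 - qs.1.2.1,
        qs.2 - qs.1.2.2 + dot qs.1.1 qs.1.2.1 - dot qs.1.1 p.2.1)‖₊ : ℝ≥0∞)
      ∂((volume : Measure (Heis n)).prod (volume.restrict (Set.Iic p.2.2)))) < ⊤
    have hb : (∫⁻ qs, (‖f qs.1 * g (p.1 - qs.1.1, p.2.1 - qs.1.2.1,
        qs.2 - qs.1.2.2 + dot qs.1.1 qs.1.2.1 - dot qs.1.1 p.2.1)‖₊ : ℝ≥0∞)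
        ∂((volume : Measure (Heis n)).prod (volume.restrict (Set.Iic p.2.2))))
        ≤ ∫⁻ q, (‖f q‖₊ : ℝ≥0∞) * G1 (p.1 - q.1, p.2.1 - q.2.1)
            ∂(volume : Measure (Heis n)) := by
      have e1 : (∫⁻ qs, (‖f qs.1 * g (p.1 - qs.1.1, p.2.1 - qs.1.2.1,
          qs.2 - qs.1.2.2 + dot qs.1.1 qs.1.2.1 - dot qs.1.1 p.2.1)‖₊ : ℝ≥0∞)
          ∂((volume : Measure (Heis n)).prod (volume.restrict (Set.Iic p.2.2))))
          = ∫⁻ q, (∫⁻ s in Set.Iic p.2.2, (‖f q * g (p.1 - q.1, p.2.1 - q.2.1,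
              s - q.2.2 + dot q.1 q.2.1 - dot q.1 p.2.1)‖₊ : ℝ≥0∞))
            ∂(volume : Measure (Heis n)) :=
        lintegral_prod _ hmeas2.nnnorm.coe_nnreal_ennreal.aemeasurable
      have hpt : ∀ q : Heis n, (∫⁻ s in Set.Iic p.2.2, (‖f q * g (p.1 - q.1, p.2.1 - q.2.1,
          s - q.2.2 + dot q.1 q.2.1 - dot q.1 p.2.1)‖₊ : ℝ≥0∞))
          ≤ (‖f q‖₊ : ℝ≥0∞) * G1 (p.1 - q.1, p.2.1 - q.2.1) := by
        intro q
        have h1 : (∫⁻ s in Set.Iic p.2.2, (‖f q * g (p.1 - q.1, p.2.1 - q.2.1,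
            s - q.2.2 + dot q.1 q.2.1 - dot q.1 p.2.1)‖₊ : ℝ≥0∞))
            = (‖f q‖₊ : ℝ≥0∞) * ∫⁻ s in Set.Iic p.2.2, (‖g (p.1 - q.1, p.2.1 - q.2.1,
              s - q.2.2 + dot q.1 q.2.1 - dot q.1 p.2.1)‖₊ : ℝ≥0∞) := by
          rw [← lintegral_const_mul' _ _ ENNReal.coe_ne_top]
          exact lintegral_congr fun s => by
            simp only [nnnorm_mul, ENNReal.coe_mul]
        rw [h1]
        apply mul_le_mul_right
        have h2 : ∀ s : ℝ, s - q.2.2 + dot q.1 q.2.1 - dot q.1 p.2.1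
            = s - (q.2.2 - dot q.1 q.2.1 + dot q.1 p.2.1) := fun s => by ring
        calc (∫⁻ s in Set.Iic p.2.2, (‖g (p.1 - q.1, p.2.1 - q.2.1,
              s - q.2.2 + dot q.1 q.2.1 - dot q.1 p.2.1)‖₊ : ℝ≥0∞))
            = ∫⁻ s in Set.Iic p.2.2, (‖g (p.1 - q.1, p.2.1 - q.2.1,
              s - (q.2.2 - dot q.1 q.2.1 + dot q.1 p.2.1))‖₊ : ℝ≥0∞) :=
              lintegral_congr fun s => congrArg
                (fun w => ((‖g (p.1 - q.1, p.2.1 - q.2.1, w)‖₊ : ℝ≥0∞))) (h2 s)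
          _ ≤ G1 (p.1 - q.1, p.2.1 - q.2.1) := hinner _ _ _
      rw [e1]
      exact lintegral_mono hpt
    have hc : ∫⁻ q, (‖f q‖₊ : ℝ≥0∞) * G1 (p.1 - q.1, p.2.1 - q.2.1)
        ∂(volume : Measure (Heis n)) = W (p.1, p.2.1) := by
      have hker : Measurable (fun q : Heis n =>
          (‖f q‖₊ : ℝ≥0∞) * G1 (p.1 - q.1, p.2.1 - q.2.1)) := by
        apply Measurable.mul hfm.nnnorm.coe_nnreal_ennreal
        exact hG1m.comp ((measurable_const.sub measurable_fst).prodMk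
          (measurable_const.sub (measurable_fst.comp measurable_snd)))
      calc ∫⁻ q, (‖f q‖₊ : ℝ≥0∞) * G1 (p.1 - q.1, p.2.1 - q.2.1)
            ∂(volume : Measure (Heis n))
          = ∫⁻ r, (‖f (MeasurableEquiv.prodAssoc r)‖₊ : ℝ≥0∞)
              * G1 (p.1 - (MeasurableEquiv.prodAssoc r).1,
                  p.2.1 - (MeasurableEquiv.prodAssoc r).2.1)
              ∂((volume : Measure ((Fin n → ℝ) × (Fin n → ℝ))).prod volume) :=
            ((mp_assoc n).lintegral_comp hker).symm
        _ = ∫⁻ ab, (∫⁻ c : ℝ, (‖f (ab.1, ab.2, c)‖₊ : ℝ≥0∞) * G1 (p.1 - ab.1, p.2.1 - ab.2))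
              ∂(volume : Measure ((Fin n → ℝ) × (Fin n → ℝ))) :=
            lintegral_prod _ (hker.comp (mp_assoc n).measurable).aemeasurable
        _ = W (p.1, p.2.1) :=
            lintegral_congr fun ab => lintegral_mul_const _ (hfm.comp
              ((measurable_const (a := ab.1)).prodMk
                ((measurable_const (a := ab.2)).prodMk measurable_id))).nnnorm.coe_nnreal_ennreal
    exact lt_of_le_of_lt (hb.trans (le_of_eq hc)) hp
  -- the change-of-variables identity in the last coordinate
  have step1 : ∀ q : Heis n,
      T g (p.1 - q.1, p.2.1 - q.2.1, p.2.2 - q.2.2 + dot q.1 q.2.1 - dot q.1 p.2.1)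
        = ∫ s in Set.Iic p.2.2, g (p.1 - q.1, p.2.1 - q.2.1,
            s - q.2.2 + dot q.1 q.2.1 - dot q.1 p.2.1) := by
    intro q
    have h1 : p.2.2 - q.2.2 + dot q.1 q.2.1 - dot q.1 p.2.1
        = p.2.2 - (q.2.2 - dot q.1 q.2.1 + dot q.1 p.2.1) := by ring
    show (∫ t in Set.Iic (p.2.2 - q.2.2 + dot q.1 q.2.1 - dot q.1 p.2.1),
        g (p.1 - q.1, p.2.1 - q.2.1, t)) = _
    rw [h1, shift_Iic]
    exact integral_congr_ae (Filter.Eventually.of_forall fun s =>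
      congrArg (fun w => g (p.1 - q.1, p.2.1 - q.2.1, w))
        (show s - (q.2.2 - dot q.1 q.2.1 + dot q.1 p.2.1)
          = s - q.2.2 + dot q.1 q.2.1 - dot q.1 p.2.1 from by ring))
  -- main computation
  show hconv f (T g) p = T (hconv f g) p
  calc hconv f (T g) p
      = ∫ q : Heis n, f q * ∫ s in Set.Iic p.2.2, g (p.1 - q.1, p.2.1 - q.2.1,
          s - q.2.2 + dot q.1 q.2.1 - dot q.1 p.2.1) := by
        unfold hconv
        exact integral_congr_ae (Filter.Eventually.of_forall fun q =>
          congrArg (fun w => f q * w) (step1 q))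
    _ = ∫ q : Heis n, ∫ s in Set.Iic p.2.2, f q * g (p.1 - q.1, p.2.1 - q.2.1,
          s - q.2.2 + dot q.1 q.2.1 - dot q.1 p.2.1) :=
        integral_congr_ae (Filter.Eventually.of_forall fun q => (integral_const_mul _ _).symm)
    _ = ∫ s in Set.Iic p.2.2, ∫ q : Heis n, f q * g (p.1 - q.1, p.2.1 - q.2.1,
          s - q.2.2 + dot q.1 q.2.1 - dot q.1 p.2.1) :=
        integral_integral_swap hint
    _ = T (hconv f g) p := rfl

end HconvAux

/-- For compactly supported `f, g ∈ L²(H_n)` with `Sg = 0` a.e.,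
`f *_H (Tg) = T(f *_H g)` a.e. on `H_n`. -/
theorem hconv_T_right (n : ℕ) (hn : 1 ≤ n) (f g : Heis n → ℂ)
    (hf : MemLp f 2 volume) (hg : MemLp g 2 volume)
    (hfc : AECompactlySupported f) (hgc : AECompactlySupported g)
    (hSg : S g =ᵐ[volume] 0) :
    hconv f (T g) =ᵐ[volume] T (hconv f g) := by
  classical
  have hfi : Integrable f volume := HconvAux.integrable_of_L2 hf hfc
  have hgi : Integrable g volume := HconvAux.integrable_of_L2 hg hgc
  -- measurable representatives
  set f' := hf.aestronglyMeasurable.mk f with hf'def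
  set g' := hg.aestronglyMeasurable.mk g with hg'def
  have hff' : f =ᵐ[volume] f' := hf.aestronglyMeasurable.ae_eq_mk
  have hgg' : g =ᵐ[volume] g' := hg.aestronglyMeasurable.ae_eq_mk
  have hf'm : Measurable f' := hf.aestronglyMeasurable.stronglyMeasurable_mk.measurable
  have hg'm : Measurable g' := hg.aestronglyMeasurable.stronglyMeasurable_mk.measurable
  have hfi' : Integrable f' volume := hfi.congr hff'
  have hgi' : Integrable g' volume := hgi.congr hgg'
  have hkey := HconvAux.key n f' g' hf'm hg'm hfi' hgi'
  -- T g =ᵐ T g'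
  have hTg : T g =ᵐ[volume] T g' := by
    have h0 : (fun r : ((Fin n → ℝ) × (Fin n → ℝ)) × ℝ => g (MeasurableEquiv.prodAssoc r))
        =ᵐ[volume] fun r => g' (MeasurableEquiv.prodAssoc r) :=
      (HconvAux.mp_assoc n).quasiMeasurePreserving.ae_eq_comp hgg'
    rw [show (volume : Measure (((Fin n → ℝ) × (Fin n → ℝ)) × ℝ))
        = (volume : Measure ((Fin n → ℝ) × (Fin n → ℝ))).prod volume
      from volume_eq_prod _ _] at h0
    have h3 := Measure.ae_ae_of_ae_prod h0
    have h4 : ∀ᵐ xy ∂(volume : Measure ((Fin n → ℝ) × (Fin n → ℝ))),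
        ∀ z : ℝ, T g (xy.1, xy.2, z) = T g' (xy.1, xy.2, z) := by
      filter_upwards [h3] with xy hxy z
      show (∫ t in Set.Iic z, g (xy.1, xy.2, t)) = ∫ t in Set.Iic z, g' (xy.1, xy.2, t)
      exact integral_congr_ae (ae_restrict_of_ae hxy)
    have h5 := HconvAux.ae_lift
      (fun xy => ∀ z : ℝ, T g (xy.1, xy.2, z) = T g' (xy.1, xy.2, z)) h4
    filter_upwards [h5] with p hp
    exact hp p.2.2
  -- hconv f (T g) = hconv f' (T g') everywhere
  have h1 : ∀ p : Heis n, hconv f (T g) p = hconv f' (T g') p := by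
    intro p
    have hσ := (HconvAux.sigma_mp (n := n) p).quasiMeasurePreserving
    have hTcomp : (fun q : Heis n => T g ((p.1 - q.1, p.2.1 - q.2.1,
        p.2.2 - q.2.2 + dot q.1 q.2.1 - dot q.1 p.2.1) : Heis n))
        =ᵐ[volume] fun q => T g' ((p.1 - q.1, p.2.1 - q.2.1,
          p.2.2 - q.2.2 + dot q.1 q.2.1 - dot q.1 p.2.1) : Heis n) :=
      hσ.ae_eq_comp hTg
    refine integral_congr_ae ?_
    filter_upwards [hff', hTcomp] with q hq1 hq2
    rw [hq1, hq2]
  -- hconv f g = hconv f' g' everywhere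
  have h2 : ∀ p : Heis n, hconv f g p = hconv f' g' p := by
    intro p
    have hσ := (HconvAux.sigma_mp (n := n) p).quasiMeasurePreserving
    have hgcomp : (fun q : Heis n => g ((p.1 - q.1, p.2.1 - q.2.1,
        p.2.2 - q.2.2 + dot q.1 q.2.1 - dot q.1 p.2.1) : Heis n))
        =ᵐ[volume] fun q => g' ((p.1 - q.1, p.2.1 - q.2.1,
          p.2.2 - q.2.2 + dot q.1 q.2.1 - dot q.1 p.2.1) : Heis n) :=
      hσ.ae_eq_comp hgg'
    refine integral_congr_ae ?_
    filter_upwards [hff', hgcomp] with q hq1 hq2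
    rw [hq1, hq2]
  filter_upwards [hkey] with p hp
  rw [h1 p, hp]
  show T (hconv f' g') p = T (hconv f g) p
  exact integral_congr_ae (Filter.Eventually.of_forall fun t => (h2 (p.1, p.2.1, t)).symm)
end
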